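/- Let ω > 0, κ ≥ 0 be reals, let α > 0 and α', β, β' be reals, and let n, m ∈ ℕ. Define the density ϱ(r) = (α / ω^{α'}) · (ω^{β'} · r^{−2β})^{κ·m} · r^{2(α−1)} · exp(−r^{2α} / ω^{α'}) for r > 0. Then the generalized moment identity 2 ∫_0^∞ ϱ(r) · r^{2(α·n + β·κ·m) + 1} / ω^{α'·n + β'·κ·m} dr = n! holds. (This is the solution of the generalized moment problem for the sub-classes of first-class coherent states with one degree of freedom.) -/

import Mathlib

open MeasureTheory Nat

/-- Solution of the generalized moment problem for the sub-classes of first-class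
coherent states with one degree of freedom: the density
`ϱ(r) = (α/ω^α') (ω^β' r^(-2β))^(κm) r^(2(α-1)) exp(-r^(2α)/ω^α')` satisfies
`2 ∫₀^∞ ϱ(r) r^(2(αn+βκm)+1) / ω^(α'n+β'κm) dr = n!`. -/
theorem generalized_moment_problem_first_class (ω κ α α' β β' : ℝ)
    (hω : 0 < ω) (hκ : 0 ≤ κ) (hα : 0 < α) (n m : ℕ) :
    2 * ∫ r in Set.Ioi (0 : ℝ),
        ((α / ω ^ α') * (ω ^ β' * r ^ (-2 * β)) ^ (κ * m) * r ^ (2 * (α - 1)) *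
            Real.exp (-(r ^ (2 * α)) / ω ^ α')) *
          (r ^ (2 * (α * n + β * κ * m) + 1) / ω ^ (α' * n + β' * κ * m))
      = (n ! : ℝ) := by
  have hωα' : (0:ℝ) < ω ^ α' := Real.rpow_pos_of_pos hω _
  have hb : (0:ℝ) < (ω ^ α')⁻¹ := by positivity
  have hcong : ∀ r ∈ Set.Ioi (0:ℝ),
      ((α / ω ^ α') * (ω ^ β' * r ^ (-2 * β)) ^ (κ * m) * r ^ (2 * (α - 1)) *
          Real.exp (-(r ^ (2 * α)) / ω ^ α')) *
        (r ^ (2 * (α * n + β * κ * m) + 1) / ω ^ (α' * n + β' * κ * m))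
      = (α * ω ^ (-(α' * (n + 1)))) *
          (r ^ (2 * α * (n + 1) - 1) * Real.exp (-(ω ^ α')⁻¹ * r ^ (2 * α))) := by
    intro r hr
    have hr' : (0:ℝ) < r := hr
    have A : (ω ^ β' * r ^ (-2 * β)) ^ (κ * (m:ℝ))
        = ω ^ (β' * (κ * (m:ℝ))) * r ^ (-2 * β * (κ * (m:ℝ))) := by
      rw [Real.mul_rpow (Real.rpow_pos_of_pos hω _).le (Real.rpow_pos_of_pos hr' _).le,
        ← Real.rpow_mul hω.le, ← Real.rpow_mul hr'.le]
    have B : r ^ (-2 * β * (κ * (m:ℝ))) * r ^ (2 * (α - 1)) * r ^ (2 * (α * n + β * κ * m) + 1)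
        = r ^ (2 * α * ((n:ℝ) + 1) - 1) := by
      rw [← Real.rpow_add hr', ← Real.rpow_add hr']
      congr 1; push_cast; ring
    have C : ω ^ (β' * (κ * (m:ℝ))) / ω ^ α' / ω ^ (α' * n + β' * κ * m)
        = ω ^ (-(α' * ((n:ℝ) + 1))) := by
      rw [← Real.rpow_sub hω, ← Real.rpow_sub hω]
      congr 1; push_cast; ring
    have D : Real.exp (-(r ^ (2 * α)) / ω ^ α') = Real.exp (-(ω ^ α')⁻¹ * r ^ (2 * α)) := by
      congr 1; field_simp
    rw [A, D]
    linear_combination α * Real.exp (-(ω ^ α')⁻¹ * r ^ (2 * α)) *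
        (ω ^ (β' * (κ * (m:ℝ))) / ω ^ α' / ω ^ (α' * n + β' * κ * m)) * B +
      α * Real.exp (-(ω ^ α')⁻¹ * r ^ (2 * α)) * r ^ (2 * α * ((n:ℝ) + 1) - 1) * C
  rw [setIntegral_congr_fun measurableSet_Ioi hcong, integral_const_mul,
    integral_rpow_mul_exp_neg_mul_rpow (by positivity) (by
      have h : (0:ℝ) < 2 * α * (n + 1) := by positivity
      linarith) hb]
  have h1 : (-(2 * α * (n + 1) - 1 + 1) / (2 * α) : ℝ) = -(n + 1) := by
    field_simp; ring
  have h2 : ((2 * α * (n + 1) - 1 + 1) / (2 * α) : ℝ) = n + 1 := by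
    field_simp; ring
  have hG : Real.Gamma ((n : ℝ) + 1) = (n ! : ℝ) := Real.Gamma_nat_eq_factorial n
  have hbpow : ((ω ^ α')⁻¹ : ℝ) ^ (-((n:ℝ) + 1)) = ω ^ (α' * ((n:ℝ) + 1)) := by
    rw [← Real.rpow_neg hω.le, ← Real.rpow_mul hω.le]
    ring_nf
  rw [h1, h2, hbpow, hG, Real.rpow_neg hω.le]
  have hne : ω ^ (α' * ((n:ℝ) + 1)) ≠ 0 := (Real.rpow_pos_of_pos hω _).ne'
  field_simp
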